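/- The maximal contact number for 5 points on the sphere equals 8: there is a 5-point configuration on S² whose contact graph has 8 edges, and no 5-point configuration has 9 or more edges. -/

import Mathlib

open scoped RealInnerProductSpace
open scoped Classical

noncomputable section

/-- Angular (geodesic) distance on the unit sphere in `ℝ³`. -/
def gdist (x y : EuclideanSpace ℝ (Fin 3)) : ℝ := Real.arccos ⟪x, y⟫

/-- `e(X)`: the number of unordered pairs of distinct points of `X` at angular distance
exactly `d` (the edges of the contact graph `CG(X)` when `d = ψ(X)`). -/
def contactNumber (X : Finset (EuclideanSpace ℝ (Fin 3))) (d : ℝ) : ℕ :=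
  (X.sym2.filter (fun s => ¬ s.IsDiag ∧
    ∀ x ∈ s, ∀ y ∈ s, x ≠ y → gdist x y = d)).card

abbrev E3 := EuclideanSpace ℝ (Fin 3)

lemma tetra {c : ℝ} {v : Fin 4 → E3} (hn : ∀ i, ‖v i‖ = 1)
    (hne : v 0 ≠ v 1)
    (hc : ∀ i j, i ≠ j → ⟪v i, v j⟫ = c) :
    c = -1/3 ∧ ∑ i, v i = 0 := by
  have hdep : ¬ LinearIndependent ℝ v := by
    intro h
    have := h.fintype_card_le_finrank
    rw [finrank_euclideanSpace_fin] at this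
    simp at this
  rw [Fintype.not_linearIndependent_iff] at hdep
  obtain ⟨g, hsum, k, hk⟩ := hdep
  have hc1 : c ≠ 1 := by
    intro h
    apply hne
    have : ⟪v 0, v 1⟫ = 1 := by rw [hc 0 1 (by decide), h]
    exact (inner_eq_one_iff_of_norm_eq_one (hn 0) (hn 1)).mp this
  set s : ℝ := ∑ i, g i with hs
  have key : ∀ j, g j * (1 - c) + c * s = 0 := by
    intro j
    have h0 : ⟪v j, ∑ i, g i • v i⟫ = 0 := by rw [hsum, inner_zero_right]
    rw [inner_sum] at h0
    have : ∀ i, ⟪v j, g i • v i⟫ = g i * (if i = j then 1 else c) := by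
      intro i
      rw [real_inner_smul_right]
      by_cases h : i = j
      · subst h; rw [if_pos rfl, real_inner_self_eq_norm_sq, hn i]; ring
      · rw [if_neg h, hc j i (Ne.symm h)]
    rw [Finset.sum_congr rfl (fun i _ => this i)] at h0
    have step : ∀ i, g i * (if i = j then 1 else c) =
        c * g i + (if i = j then g i * (1 - c) else 0) := by
      intro i; split <;> ring
    rw [Finset.sum_congr rfl (fun i _ => step i), Finset.sum_add_distrib,
      Finset.sum_ite_eq' Finset.univ j (fun i => g i * (1 - c)),
      if_pos (Finset.mem_univ j), ← Finset.mul_sum, ← hs] at h0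
    linarith
  -- all g j equal
  have hgconst : ∀ j, g j = g k := by
    intro j
    have h1 := key j
    have h2 := key k
    have : g j * (1 - c) = g k * (1 - c) := by linarith
    have hc1' : (1 : ℝ) - c ≠ 0 := sub_ne_zero.mpr (Ne.symm hc1)
    exact mul_right_cancel₀ hc1' this
  have hsval : s = 4 * g k := by
    rw [hs]
    rw [Finset.sum_congr rfl (fun j _ => hgconst j)]
    simp [Finset.sum_const, nsmul_eq_mul]
  have hck := key k
  rw [hsval] at hck
  have hcval : c = -1/3 := by
    have : g k * (1 + 3 * c) = 0 := by linarith [hck]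
    rcases mul_eq_zero.mp this with h | h
    · exact absurd h hk
    · linarith
  refine ⟨hcval, ?_⟩
  have : ∑ i, g i • v i = g k • ∑ i, v i := by
    rw [Finset.smul_sum]
    exact Finset.sum_congr rfl (fun i _ => by rw [hgconst i])
  rw [this] at hsum
  exact (smul_eq_zero.mp hsum).resolve_left hk

lemma inner_le_one (x y : E3) (hx : ‖x‖ = 1) (hy : ‖y‖ = 1) :
    |⟪x, y⟫| ≤ 1 := by
  have := abs_real_inner_le_norm x y
  rwa [hx, hy, one_mul] at this

lemma upper (X : Finset E3) (h5 : X.card = 5) (hnorm : ∀ p ∈ X, ‖p‖ = 1)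
    (d : ℝ) (hmin : ∀ p ∈ X, ∀ q ∈ X, p ≠ q → d ≤ gdist p q) :
    contactNumber X d ≤ 8 := by
  by_contra hcon
  push_neg at hcon
  have h9 : 9 ≤ contactNumber X d := hcon
  set P : Sym2 E3 → Prop := fun s => ¬ s.IsDiag ∧
    ∀ x ∈ s, ∀ y ∈ s, x ≠ y → gdist x y = d with hP
  set F := X.sym2.filter P with hF
  set O := X.sym2.filter (fun s => ¬ s.IsDiag) with hO
  have hFcard : contactNumber X d = F.card := rfl
  have hFO : F ⊆ O := by
    intro s hs
    rw [hF, Finset.mem_filter] at hs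
    rw [hO, Finset.mem_filter]
    exact ⟨hs.1, hs.2.1⟩
  have hsym2card : X.sym2.card = 15 := by
    rw [Finset.card_sym2, h5]
    decide
  have hdiagcard : (X.sym2.filter Sym2.IsDiag).card = 5 := by
    have himg : X.sym2.filter Sym2.IsDiag = X.image Sym2.diag := by
      ext z
      simp only [Finset.mem_filter, Finset.mem_image]
      constructor
      · rintro ⟨hz, hd⟩
        obtain ⟨a, rfl⟩ : ∃ a, Sym2.diag a = z := by
          induction z using Sym2.ind with
          | _ a b => exact ⟨a, by rw [Sym2.mk_isDiag_iff.mp hd]; rfl⟩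
        exact ⟨a, Finset.diag_mem_sym2_iff.mp hz, rfl⟩
      · rintro ⟨a, ha, rfl⟩
        exact ⟨Finset.diag_mem_sym2_iff.mpr ha, Sym2.diag_isDiag a⟩
    rw [himg, Finset.card_image_of_injective _ Sym2.diag_injective, h5]
  have hOcard : O.card = 10 := by
    rw [hO, Finset.filter_not, Finset.card_sdiff_of_subset (Finset.filter_subset _ _),
      hsym2card, hdiagcard]
  have hF9 : 9 ≤ F.card := by omega
  have hdiff : (O \ F).card ≤ 1 := by
    have hsd : (O \ F).card + F.card = O.card :=
      Finset.card_sdiff_add_card_eq_card hFO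
    omega
  -- the key claim
  have claim : ∃ b ∈ X, ∀ p ∈ X.erase b, ∀ q ∈ X.erase b, p ≠ q →
      gdist p q = d := by
    have hmem : ∀ p ∈ X, ∀ q ∈ X, p ≠ q → s(p, q) ∈ O := by
      intro p hp q hq hpq
      rw [hO, Finset.mem_filter, Finset.mk_mem_sym2_iff]
      exact ⟨⟨hp, hq⟩, by simpa [Sym2.mk_isDiag_iff] using hpq⟩
    rcases Finset.eq_empty_or_nonempty (O \ F) with hemp | ⟨z, hz⟩
    · obtain ⟨b, hb⟩ := Finset.card_pos.mp (by omega : 0 < X.card)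
      refine ⟨b, hb, ?_⟩
      intro p hp q hq hpq
      have hpX := Finset.mem_of_mem_erase hp
      have hqX := Finset.mem_of_mem_erase hq
      have : s(p, q) ∈ F := by
        by_contra hnot
        have : s(p,q) ∈ O \ F := Finset.mem_sdiff.mpr ⟨hmem p hpX q hqX hpq, hnot⟩
        rw [hemp] at this
        exact absurd this (Finset.notMem_empty _)
      rw [hF, Finset.mem_filter] at this
      exact this.2.2 p (Sym2.mem_mk_left _ _) q (Sym2.mem_mk_right _ _) hpq
    · obtain ⟨a, b, rfl⟩ : ∃ a b, z = s(a, b) :=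
        Sym2.ind (f := fun z => ∃ a b, z = s(a, b)) (fun a b => ⟨a, b, rfl⟩) z
      have hzO : s(a, b) ∈ O := (Finset.mem_sdiff.mp hz).1
      rw [hO, Finset.mem_filter] at hzO
      have habX : a ∈ X ∧ b ∈ X := Finset.mk_mem_sym2_iff.mp hzO.1
      refine ⟨b, habX.2, ?_⟩
      intro p hp q hq hpq
      have hpX := Finset.mem_of_mem_erase hp
      have hqX := Finset.mem_of_mem_erase hq
      have hpb : p ≠ b := Finset.ne_of_mem_erase hp
      have hqb : q ≠ b := Finset.ne_of_mem_erase hq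
      have : s(p, q) ∈ F := by
        by_contra hnot
        have hin : s(p,q) ∈ O \ F := Finset.mem_sdiff.mpr ⟨hmem p hpX q hqX hpq, hnot⟩
        have := Finset.card_le_one.mp hdiff _ hin _ hz
        rw [Sym2.eq_iff] at this
        rcases this with ⟨_, h⟩ | ⟨h, _⟩
        · exact hqb h
        · exact hpb h
      rw [hF, Finset.mem_filter] at this
      exact this.2.2 p (Sym2.mem_mk_left _ _) q (Sym2.mem_mk_right _ _) hpq
  obtain ⟨b, hbX, hYd⟩ := claim
  set Y := X.erase b with hY
  have hYcard : Y.card = 4 := by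
    rw [hY, Finset.card_erase_of_mem hbX, h5]
  obtain ⟨w, t, hwt, hins, ht3⟩ := Finset.card_eq_succ.mp hYcard
  obtain ⟨x, y, z, hxy, hxz, hyz, rfl⟩ := Finset.card_eq_three.mp ht3
  set v : Fin 4 → E3 := ![w, x, y, z] with hv
  have hvY : ∀ i, v i ∈ Y := by
    intro i
    rw [← hins]
    fin_cases i <;>
      simp only [hv, Matrix.cons_val_zero, Matrix.cons_val_one, Matrix.head_cons,
        Matrix.cons_val_two, Matrix.tail_cons, Matrix.cons_val_three, Fin.isValue,
        Finset.mem_insert] <;> tauto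
  have hvX : ∀ i, v i ∈ X := fun i => Finset.mem_of_mem_erase (hvY i)
  have hvnorm : ∀ i, ‖v i‖ = 1 := fun i => hnorm _ (hvX i)
  have hwx : w ≠ x := fun h => hwt (by rw [h]; simp)
  have hwy : w ≠ y := fun h => hwt (by rw [h]; simp)
  have hwz : w ≠ z := fun h => hwt (by rw [h]; simp)
  have hvne : ∀ i j, i ≠ j → v i ≠ v j := by
    intro i j hij
    fin_cases i <;> fin_cases j <;>
      simp only [hv, Matrix.cons_val_zero, Matrix.cons_val_one, Matrix.head_cons,
        Matrix.cons_val_two, Matrix.tail_cons, Matrix.cons_val_three, Fin.isValue] <;>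
      first
        | exact absurd rfl hij
        | assumption
        | exact hwx.symm
        | exact hwy.symm
        | exact hwz.symm
        | exact hxy.symm
        | exact hxz.symm
        | exact hyz.symm
  have hcd : ∀ i j, i ≠ j → ⟪v i, v j⟫ = Real.cos d := by
    intro i j hij
    have hd : gdist (v i) (v j) = d := hYd _ (hvY i) _ (hvY j) (hvne i j hij)
    rw [gdist] at hd
    have hb := abs_le.mp (inner_le_one (v i) (v j) (hvnorm i) (hvnorm j))
    rw [← hd, Real.cos_arccos hb.1 hb.2]
  obtain ⟨hc13, hsum0⟩ := tetra hvnorm (hvne 0 1 (by decide)) hcd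
  -- fifth point
  have hbv : ∀ i, v i ≠ b := fun i => Finset.ne_of_mem_erase (hvY i)
  have hd0 : 0 ≤ d := by
    have := hcd 0 1 (by decide)
    have hg : gdist (v 0) (v 1) = d := hYd _ (hvY 0) _ (hvY 1) (hvne 0 1 (by decide))
    rw [gdist] at hg
    rw [← hg]
    exact Real.arccos_nonneg _
  have hkey : ∀ i, ⟪b, v i⟫ ≤ -1/3 := by
    intro i
    have hdle : d ≤ gdist b (v i) := hmin b hbX (v i) (hvX i) (Ne.symm (hbv i))
    rw [gdist] at hdle
    have hb' := abs_le.mp (inner_le_one b (v i) (hnorm b hbX) (hvnorm i))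
    have h1 : Real.cos (Real.arccos ⟪b, v i⟫) ≤ Real.cos d :=
      Real.cos_le_cos_of_nonneg_of_le_pi hd0 (Real.arccos_le_pi _) hdle
    rw [Real.cos_arccos hb'.1 hb'.2] at h1
    linarith [h1, hc13]
  have hzero : ⟪b, ∑ i, v i⟫ = 0 := by rw [hsum0, inner_zero_right]
  rw [inner_sum] at hzero
  have hle : ∑ i, ⟪b, v i⟫ ≤ ∑ _i : Fin 4, (-1/3 : ℝ) :=
    Finset.sum_le_sum (fun i _ => hkey i)
  have hconst : ∑ _i : Fin 4, (-1/3 : ℝ) = -4/3 := by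
    rw [Finset.sum_const, Finset.card_univ, Fintype.card_fin, nsmul_eq_mul]
    norm_num
  rw [hzero, hconst] at hle
  norm_num at hle


lemma gdist_comm (x y : E3) : gdist x y = gdist y x := by
  rw [gdist, gdist, real_inner_comm]

lemma P_mk (x y : E3) (d : ℝ) :
    (¬ (s(x, y)).IsDiag ∧ ∀ a ∈ s(x, y), ∀ b ∈ s(x, y), a ≠ b → gdist a b = d) ↔
      (x ≠ y ∧ gdist x y = d) := by
  constructor
  · rintro ⟨hdiag, h⟩
    have hxy : x ≠ y := by simpa [Sym2.mk_isDiag_iff] using hdiag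
    exact ⟨hxy, h x (Sym2.mem_mk_left _ _) y (Sym2.mem_mk_right _ _) hxy⟩
  · rintro ⟨hxy, h⟩
    refine ⟨by simpa [Sym2.mk_isDiag_iff] using hxy, ?_⟩
    intro a ha b hb hab
    rw [Sym2.mem_iff] at ha hb
    rcases ha with rfl | rfl <;> rcases hb with rfl | rfl
    · exact absurd rfl hab
    · exact h
    · rw [gdist_comm]; exact h
    · exact absurd rfl hab

def ee (i : Fin 3) : E3 := EuclideanSpace.single i (1 : ℝ)

def vv : Fin 5 → E3 := ![ee 0, ee 1, ee 2, -ee 0, -ee 1]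

lemma inner_ee (i j : Fin 3) : ⟪ee i, ee j⟫ = if i = j then (1:ℝ) else 0 := by
  rw [ee, ee, EuclideanSpace.inner_single_left, EuclideanSpace.single_apply]
  simp [eq_comm]

lemma norm_vv (i : Fin 5) : ‖vv i‖ = 1 := by
  fin_cases i <;>
    simp [vv, ee, EuclideanSpace.norm_single, norm_neg]

lemma inner_vv : ∀ i j : Fin 5, i ≠ j →
    ⟪vv i, vv j⟫ = (if s(i, j) = s(0, 3) ∨ s(i, j) = s(1, 4) then (-1 : ℝ) else 0) := by
  intro i j hij
  fin_cases i <;> fin_cases j <;>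
    simp [vv, inner_neg_left, inner_neg_right, inner_ee, Sym2.eq_iff,
      -PiLp.inner_apply, (by simp [ee, EuclideanSpace.norm_single] : ∀ i, ‖ee i‖ = 1)] <;> exact absurd rfl hij

lemma vv_inj : Function.Injective vv := by
  intro i j h
  by_contra hij
  have hthis := inner_vv i j hij
  rw [h, real_inner_self_eq_norm_sq, norm_vv] at hthis
  split at hthis <;> norm_num at hthis

def Xex : Finset E3 := Finset.image vv Finset.univ

lemma Xex_card : Xex.card = 5 := by
  rw [Xex, Finset.card_image_of_injective _ vv_inj]
  simp

lemma Xex_norm : ∀ p ∈ Xex, ‖p‖ = 1 := by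
  intro p hp
  obtain ⟨i, _, rfl⟩ := Finset.mem_image.mp hp
  exact norm_vv i

lemma gdist_vv (i j : Fin 5) (hij : i ≠ j) :
    gdist (vv i) (vv j) =
      if s(i, j) = s(0, 3) ∨ s(i, j) = s(1, 4) then Real.pi else Real.pi / 2 := by
  rw [gdist, inner_vv i j hij]
  split
  · exact Real.arccos_neg_one
  · exact Real.arccos_zero

lemma contact_Xex : contactNumber Xex (Real.pi / 2) = 8 := by
  rw [contactNumber, Xex, Finset.sym2_image, Finset.filter_image,
    Finset.card_image_of_injective _ (Sym2.map.injective vv_inj)]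
  have hcongr : Finset.filter
      (fun a => ¬ (Sym2.map vv a).IsDiag ∧
        ∀ x ∈ Sym2.map vv a, ∀ y ∈ Sym2.map vv a, x ≠ y → gdist x y = Real.pi / 2)
      Finset.univ.sym2 =
      Finset.filter (fun z => ¬ z.IsDiag ∧ z ≠ s(0, 3) ∧ z ≠ s(1, 4))
        Finset.univ.sym2 := by
    apply Finset.filter_congr
    intro z _
    induction z using Sym2.ind with
    | _ i j =>
      rw [Sym2.map_pair_eq, P_mk, Sym2.mk_isDiag_iff]
      constructor
      · rintro ⟨hne, hd⟩
        have hij : i ≠ j := fun h => hne (by rw [h])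
        have := gdist_vv i j hij
        rw [hd] at this
        constructor
        · simpa [Sym2.mk_isDiag_iff] using hij
        · by_contra hbad
          rw [not_and_or, not_not, not_not] at hbad
          have hb : s(i, j) = s(0, 3) ∨ s(i, j) = s(1, 4) := hbad
          rw [if_pos hb] at this
          have := Real.pi_pos
          linarith [this]
      · rintro ⟨hdiag, h1, h2⟩
        have hij : i ≠ j := by simpa [Sym2.mk_isDiag_iff] using hdiag
        refine ⟨fun h => hij (vv_inj h), ?_⟩
        rw [gdist_vv i j hij, if_neg (by tauto)]
  rw [hcongr]
  decide

/-- The maximal contact number for 5 points on the sphere equals 8: there is a 5-point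
configuration on `S²` whose contact graph has 8 edges, and no 5-point configuration has
9 or more edges. -/
theorem max_contact_number_five :
    (∃ X : Finset (EuclideanSpace ℝ (Fin 3)), X.card = 5 ∧
      (∀ p ∈ X, ‖p‖ = 1) ∧
      ∃ d : ℝ, (∀ p ∈ X, ∀ q ∈ X, p ≠ q → d ≤ gdist p q) ∧
        (∃ p ∈ X, ∃ q ∈ X, p ≠ q ∧ gdist p q = d) ∧
        contactNumber X d = 8) ∧
    (∀ X : Finset (EuclideanSpace ℝ (Fin 3)), X.card = 5 →
      (∀ p ∈ X, ‖p‖ = 1) →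
      ∀ d : ℝ, (∀ p ∈ X, ∀ q ∈ X, p ≠ q → d ≤ gdist p q) →
        (∃ p ∈ X, ∃ q ∈ X, p ≠ q ∧ gdist p q = d) →
        contactNumber X d ≤ 8) := by
  constructor
  · refine ⟨Xex, Xex_card, Xex_norm, Real.pi / 2, ?_, ?_, contact_Xex⟩
    · intro p hp q hq hpq
      obtain ⟨i, _, rfl⟩ := Finset.mem_image.mp hp
      obtain ⟨j, _, rfl⟩ := Finset.mem_image.mp hq
      have hij : i ≠ j := fun h => hpq (by rw [h])
      rw [gdist_vv i j hij]
      split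
      · linarith [Real.pi_pos]
      · exact le_refl _
    · refine ⟨vv 0, Finset.mem_image.mpr ⟨0, Finset.mem_univ _, rfl⟩,
        vv 1, Finset.mem_image.mpr ⟨1, Finset.mem_univ _, rfl⟩, ?_, ?_⟩
      · intro h
        exact absurd (vv_inj h) (by decide)
      · rw [gdist_vv 0 1 (by decide), if_neg (by decide)]
  · intro X h5 hnorm d hmin _
    exact upper X h5 hnorm d hmin
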